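/- Let T be a bounded linear operator on a complex Hilbert space H, let n ≥ 2 be an integer, and let x ∈ H with ‖x‖ = 1. Then |⟨Tx, x⟩|ⁿ ≤ (1/2^{n-1}) |⟨Tⁿx, x⟩| + ∑_{k=1}^{n-1} (1/2^k) ‖Tᵏx‖ ‖T*x‖^{n-k}. -/

import Mathlib

open scoped InnerProductSpace

variable {H : Type*} [NormedAddCommGroup H] [InnerProductSpace ℂ H] [CompleteSpace H]

/-- Buzano's inequality. -/
lemma buzano (a b e : H) (he : ‖e‖ = 1) :
    2 * ‖⟪a, e⟫_ℂ * ⟪e, b⟫_ℂ‖ ≤ ‖a‖ * ‖b‖ + ‖⟪a, b⟫_ℂ‖ := by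
  set u : H := (2 * ⟪e, b⟫_ℂ) • e - b with hu
  have hnorm : ‖u‖ = ‖b‖ := by
    have h1 : ⟪u, u⟫_ℂ = ⟪b, b⟫_ℂ := by
      simp only [hu, inner_sub_left, inner_sub_right, inner_smul_left, inner_smul_right]
      rw [inner_self_eq_norm_sq_to_K e, he]
      simp only [map_mul, Complex.conj_ofNat, inner_conj_symm]
      push_cast
      ring
    have h3 : ‖u‖ ^ 2 = ‖b‖ ^ 2 := by
      have h2 := congrArg (RCLike.re (K := ℂ)) h1
      rwa [@inner_self_eq_norm_sq ℂ, @inner_self_eq_norm_sq ℂ] at h2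
    nlinarith [norm_nonneg u, norm_nonneg b]
  have key : (2 * ⟪e, b⟫_ℂ) * ⟪a, e⟫_ℂ = ⟪a, u⟫_ℂ + ⟪a, b⟫_ℂ := by
    simp [hu, inner_sub_right, inner_smul_right]
  calc 2 * ‖⟪a, e⟫_ℂ * ⟪e, b⟫_ℂ‖ = ‖⟪a, u⟫_ℂ + ⟪a, b⟫_ℂ‖ := by
        rw [← key]; simp [norm_mul]; ring
    _ ≤ ‖⟪a, u⟫_ℂ‖ + ‖⟪a, b⟫_ℂ‖ := norm_add_le _ _
    _ ≤ ‖a‖ * ‖b‖ + ‖⟪a, b⟫_ℂ‖ := by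
        gcongr
        calc ‖⟪a, u⟫_ℂ‖ ≤ ‖a‖ * ‖u‖ := norm_inner_le_norm a u
          _ = ‖a‖ * ‖b‖ := by rw [hnorm]


lemma step_ineq (T : H →L[ℂ] H) (x : H) (hx : ‖x‖ = 1) (k : ℕ) :
    ‖⟪(T ^ k) x, x⟫_ℂ‖ * ‖⟪T x, x⟫_ℂ‖ ≤
      (1 / 2) * (‖(T ^ k) x‖ * ‖(ContinuousLinearMap.adjoint T) x‖ + ‖⟪(T ^ (k + 1)) x, x⟫_ℂ‖) := by
  have hb := buzano ((T ^ k) x) ((ContinuousLinearMap.adjoint T) x) x hx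
  have h1 : ⟪x, (ContinuousLinearMap.adjoint T) x⟫_ℂ = ⟪T x, x⟫_ℂ :=
    ContinuousLinearMap.adjoint_inner_right T x x
  have h2 : ⟪(T ^ k) x, (ContinuousLinearMap.adjoint T) x⟫_ℂ = ⟪(T ^ (k + 1)) x, x⟫_ℂ := by
    rw [ContinuousLinearMap.adjoint_inner_right, pow_succ']
    rfl
  rw [h1, h2, norm_mul] at hb
  linarith

lemma aux_ineq (T : H →L[ℂ] H) (x : H) (hx : ‖x‖ = 1) :
    ∀ m : ℕ, 1 ≤ m →
    ‖⟪T x, x⟫_ℂ‖ ^ (m + 1) ≤ (1 / 2 ^ m) * ‖⟪(T ^ (m + 1)) x, x⟫_ℂ‖ +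
      ∑ k ∈ Finset.Icc 1 m, (1 / 2 ^ k) * ‖(T ^ k) x‖ * ‖(ContinuousLinearMap.adjoint T) x‖ ^ (m + 1 - k) := by
  intro m hm
  induction m with
  | zero => omega
  | succ p ih =>
    rcases Nat.eq_or_lt_of_le hm with h | h
    · -- p = 0, base case m = 1
      have hp : p = 0 := by omega
      subst hp
      have hb := step_ineq T x hx 1
      rw [pow_one] at hb
      simp only [Finset.Icc_self, Finset.sum_singleton, pow_one]
      have : ‖⟪T x, x⟫_ℂ‖ ^ 2 = ‖⟪T x, x⟫_ℂ‖ * ‖⟪T x, x⟫_ℂ‖ := sq _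
      rw [this]
      norm_num
      norm_num at hb
      linarith
    · have hp : 1 ≤ p := by omega
      have ih' := ih hp
      have halpha : ‖⟪T x, x⟫_ℂ‖ ≤ ‖(ContinuousLinearMap.adjoint T) x‖ := by
        have h1 : ⟪x, (ContinuousLinearMap.adjoint T) x⟫_ℂ = ⟪T x, x⟫_ℂ :=
          ContinuousLinearMap.adjoint_inner_right T x x
        calc ‖⟪T x, x⟫_ℂ‖ = ‖⟪x, (ContinuousLinearMap.adjoint T) x⟫_ℂ‖ := by rw [h1]
          _ ≤ ‖x‖ * ‖(ContinuousLinearMap.adjoint T) x‖ := norm_inner_le_norm _ _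
          _ = ‖(ContinuousLinearMap.adjoint T) x‖ := by rw [hx, one_mul]
      have hmul : ‖⟪T x, x⟫_ℂ‖ ^ (p + 1 + 1) = ‖⟪T x, x⟫_ℂ‖ ^ (p + 1) * ‖⟪T x, x⟫_ℂ‖ := pow_succ _ _
      rw [hmul]
      have hα : (0:ℝ) ≤ ‖⟪T x, x⟫_ℂ‖ := norm_nonneg _
      have step1 : ‖⟪T x, x⟫_ℂ‖ ^ (p + 1) * ‖⟪T x, x⟫_ℂ‖ ≤
          ((1 / 2 ^ p) * ‖⟪(T ^ (p + 1)) x, x⟫_ℂ‖ +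
            ∑ k ∈ Finset.Icc 1 p, (1 / 2 ^ k) * ‖(T ^ k) x‖ * ‖(ContinuousLinearMap.adjoint T) x‖ ^ (p + 1 - k)) * ‖⟪T x, x⟫_ℂ‖ := by
        gcongr
      refine step1.trans ?_
      rw [add_mul, Finset.sum_mul]
      rw [Finset.sum_Icc_succ_top (by omega : 1 ≤ p + 1)]
      have term1 : (1 / 2 ^ p) * ‖⟪(T ^ (p + 1)) x, x⟫_ℂ‖ * ‖⟪T x, x⟫_ℂ‖ ≤
          (1 / 2 ^ (p + 1)) * ‖⟪(T ^ (p + 1 + 1)) x, x⟫_ℂ‖ +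
            (1 / 2 ^ (p + 1)) * ‖(T ^ (p + 1)) x‖ * ‖(ContinuousLinearMap.adjoint T) x‖ ^ (p + 1 + 1 - (p + 1)) := by
        have hs := step_ineq T x hx (p + 1)
        have hpos : (0:ℝ) < 2 ^ p := by positivity
        have : p + 1 + 1 - (p + 1) = 1 := by omega
        rw [this, pow_one]
        calc (1 / 2 ^ p) * ‖⟪(T ^ (p + 1)) x, x⟫_ℂ‖ * ‖⟪T x, x⟫_ℂ‖
            = (1 / 2 ^ p) * (‖⟪(T ^ (p + 1)) x, x⟫_ℂ‖ * ‖⟪T x, x⟫_ℂ‖) := by ring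
          _ ≤ (1 / 2 ^ p) * ((1 / 2) * (‖(T ^ (p + 1)) x‖ * ‖(ContinuousLinearMap.adjoint T) x‖ + ‖⟪(T ^ (p + 1 + 1)) x, x⟫_ℂ‖)) := by
              gcongr
          _ = (1 / 2 ^ (p + 1)) * ‖⟪(T ^ (p + 1 + 1)) x, x⟫_ℂ‖ +
              (1 / 2 ^ (p + 1)) * ‖(T ^ (p + 1)) x‖ * ‖(ContinuousLinearMap.adjoint T) x‖ := by
              rw [pow_succ]; ring
      have term2 : ∀ k ∈ Finset.Icc 1 p,
          (1 / 2 ^ k) * ‖(T ^ k) x‖ * ‖(ContinuousLinearMap.adjoint T) x‖ ^ (p + 1 - k) * ‖⟪T x, x⟫_ℂ‖ ≤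
          (1 / 2 ^ k) * ‖(T ^ k) x‖ * ‖(ContinuousLinearMap.adjoint T) x‖ ^ (p + 1 + 1 - k) := by
        intro k hk
        rw [Finset.mem_Icc] at hk
        have hexp : p + 1 + 1 - k = (p + 1 - k) + 1 := by omega
        rw [hexp, pow_succ, ← mul_assoc]
        gcongr
      calc (1 / 2 ^ p) * ‖⟪(T ^ (p + 1)) x, x⟫_ℂ‖ * ‖⟪T x, x⟫_ℂ‖ +
            ∑ k ∈ Finset.Icc 1 p, (1 / 2 ^ k) * ‖(T ^ k) x‖ * ‖(ContinuousLinearMap.adjoint T) x‖ ^ (p + 1 - k) * ‖⟪T x, x⟫_ℂ‖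
          ≤ ((1 / 2 ^ (p + 1)) * ‖⟪(T ^ (p + 1 + 1)) x, x⟫_ℂ‖ +
              (1 / 2 ^ (p + 1)) * ‖(T ^ (p + 1)) x‖ * ‖(ContinuousLinearMap.adjoint T) x‖ ^ (p + 1 + 1 - (p + 1))) +
            ∑ k ∈ Finset.Icc 1 p, (1 / 2 ^ k) * ‖(T ^ k) x‖ * ‖(ContinuousLinearMap.adjoint T) x‖ ^ (p + 1 + 1 - k) := by
            exact add_le_add term1 (Finset.sum_le_sum term2)
        _ = (1 / 2 ^ (p + 1)) * ‖⟪(T ^ (p + 1 + 1)) x, x⟫_ℂ‖ +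
            (∑ k ∈ Finset.Icc 1 p, (1 / 2 ^ k) * ‖(T ^ k) x‖ * ‖(ContinuousLinearMap.adjoint T) x‖ ^ (p + 1 + 1 - k) +
              (1 / 2 ^ (p + 1)) * ‖(T ^ (p + 1)) x‖ * ‖(ContinuousLinearMap.adjoint T) x‖ ^ (p + 1 + 1 - (p + 1))) := by
            ring

/-- The numerical radius of a bounded linear operator. -/
noncomputable def numRadius (T : H →L[ℂ] H) : ℝ :=
  sSup {r : ℝ | ∃ x : H, ‖x‖ = 1 ∧ r = ‖⟪T x, x⟫_ℂ‖}

theorem thm7 (T : H →L[ℂ] H) (n : ℕ) (hn : 2 ≤ n) (x : H) (hx : ‖x‖ = 1) :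
    ‖⟪T x, x⟫_ℂ‖ ^ n ≤ (1 / 2 ^ (n - 1)) * ‖⟪(T ^ n) x, x⟫_ℂ‖ +
      ∑ k ∈ Finset.Icc 1 (n - 1), (1 / 2 ^ k) * ‖(T ^ k) x‖ * ‖(ContinuousLinearMap.adjoint T) x‖ ^ (n - k) := by
  obtain ⟨m, rfl⟩ : ∃ m, n = m + 1 := ⟨n - 1, by omega⟩
  have hm : 1 ≤ m := by omega
  have := aux_ineq T x hx m hm
  simpa using this
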